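/- Let δ ∈ [0, 1/2] and let m be a positive integer. Let Y = (Y1, …, Ym) be a random vector with {0,1}-valued components (with arbitrary correlation among the components), let W be a random variable taking values in a finite type, and let N1, …, Nm be i.i.d. {0,1}-valued random variables with P(Nk = 1) = δ such that (N1, …, Nm) is independent of the pair (Y, W). Set Xk = Yk ⊕ Nk for k = 1, …, m. Then H(X1, …, Xm | W) ≥ m · h2( δ ⋆ h2⁻¹( H(Y1, …, Ym | W) / m ) ). (This is the m-letter superadditivity of Witsenhausen's conditional entropy bound, specialized to the binary symmetric channel: the bound for the product channel is at least m times the single-letter bound evaluated at the per-letter conditional entropy.) -/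

import Mathlib

open MeasureTheory

/-- Binary entropy function (base 2), with the convention `0 * log₂ 0 = 0`
(automatic since `Real.logb 2 0 = 0`). -/
noncomputable def h2 (p : ℝ) : ℝ :=
  -(p * Real.logb 2 p) - (1 - p) * Real.logb 2 (1 - p)

/-- Inverse of the binary entropy function: for `q ≥ 0`, the unique `r ∈ [0, 1/2]`
with `h2 r = q` (realized as the infimum of the solution set); `0` for `q < 0`. -/
noncomputable def h2inv (q : ℝ) : ℝ :=
  if q < 0 then 0 else sInf {r : ℝ | 0 ≤ r ∧ r ≤ 1 / 2 ∧ h2 r = q}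

/-- Binary convolution `a ⋆ b = a(1-b) + (1-a)b`. -/
def bconv (a b : ℝ) : ℝ := a * (1 - b) + (1 - a) * b

/-- Shannon entropy (base 2, in bits) of a random variable `X` with values in a
finite type, with respect to the measure `μ`. -/
noncomputable def H2 {Ω S : Type*} [MeasurableSpace Ω] [Fintype S]
    (μ : Measure Ω) (X : Ω → S) : ℝ :=
  -∑ s : S, (μ (X ⁻¹' {s})).toReal * Real.logb 2 (μ (X ⁻¹' {s})).toReal

/-- Mutual information (base 2, in bits): `I(X;Y) = H(X) + H(Y) - H(X,Y)`. -/
noncomputable def MI2 {Ω S T : Type*} [MeasurableSpace Ω] [Fintype S] [Fintype T]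
    (μ : Measure Ω) (X : Ω → S) (Y : Ω → T) : ℝ :=
  H2 μ X + H2 μ Y - H2 μ (fun ω => (X ω, Y ω))

/-- Conditional entropy (base 2, in bits): `H(X|W) = H(X,W) - H(W)`. -/
noncomputable def condH2 {Ω S T : Type*} [MeasurableSpace Ω] [Fintype S] [Fintype T]
    (μ : Measure Ω) (X : Ω → S) (W : Ω → T) : ℝ :=
  H2 μ (fun ω => (X ω, W ω)) - H2 μ W

/-- Conditional mutual information (base 2, in bits):
`I(X;Y|Z) = H(X|Z) + H(Y|Z) - H(X,Y|Z)`. -/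
noncomputable def condMI2 {Ω S T V : Type*} [MeasurableSpace Ω] [Fintype S] [Fintype T]
    [Fintype V] (μ : Measure Ω) (X : Ω → S) (Y : Ω → T) (Z : Ω → V) : ℝ :=
  condH2 μ X Z + condH2 μ Y Z - condH2 μ (fun ω => (X ω, Y ω)) Z

/- ### Section A : basic properties of h2 -/

lemma h2_eq (p : ℝ) : h2 p = Real.binEntropy p / Real.log 2 := by
  unfold h2 Real.binEntropy Real.logb
  rw [Real.log_inv, Real.log_inv]
  ring

lemma log2_pos : (0:ℝ) < Real.log 2 := Real.log_pos (by norm_num)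

lemma h2_zero : h2 0 = 0 := by simp [h2_eq]
lemma h2_one : h2 1 = 0 := by simp [h2_eq]
lemma h2_half : h2 (1/2) = 1 := by
  rw [h2_eq, show (1/2 : ℝ) = 2⁻¹ by norm_num, Real.binEntropy_two_inv,
    div_self log2_pos.ne']

lemma h2_one_sub (p : ℝ) : h2 (1 - p) = h2 p := by
  rw [h2_eq, h2_eq, Real.binEntropy_one_sub]

lemma h2_nonneg {p : ℝ} (h0 : 0 ≤ p) (h1 : p ≤ 1) : 0 ≤ h2 p := by
  rw [h2_eq]; exact div_nonneg (Real.binEntropy_nonneg h0 h1) log2_pos.le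

lemma h2_le_one (p : ℝ) : h2 p ≤ 1 := by
  rw [h2_eq, div_le_one log2_pos]; exact Real.binEntropy_le_log_two

lemma h2_continuous : Continuous h2 := by
  have : h2 = fun p => Real.binEntropy p / Real.log 2 := funext h2_eq
  rw [this]; exact Real.binEntropy_continuous.div_const _

lemma h2_strictMonoOn : StrictMonoOn h2 (Set.Icc 0 (1/2)) := by
  intro a ha b hb hab
  rw [h2_eq, h2_eq, div_lt_div_iff_of_pos_right log2_pos]
  have := Real.binEntropy_strictMonoOn
  rw [show (1/2:ℝ) = 2⁻¹ by norm_num] at ha hb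
  exact this ha hb hab

lemma h2_concaveOn : ConcaveOn ℝ (Set.Icc 0 1) h2 := by
  have := Real.strictConcave_binEntropy.concaveOn
  have h := this.smul (c := (Real.log 2)⁻¹) (by positivity)
  have e : h2 = fun x => (Real.log 2)⁻¹ • Real.binEntropy x := by
    funext p
    simp [h2_eq, smul_eq_mul, div_eq_inv_mul]
  rw [e]; exact h

/- ### Section B : h2inv -/

lemma h2_image : h2 '' Set.Icc 0 (1/2) = Set.Icc 0 1 := by
  apply Set.Subset.antisymm
  · rintro _ ⟨r, hr, rfl⟩
    exact ⟨h2_nonneg hr.1 (le_trans hr.2 (by norm_num)), h2_le_one r⟩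
  · have := intermediate_value_Icc (by norm_num : (0:ℝ) ≤ 1/2) h2_continuous.continuousOn
    rwa [h2_zero, h2_half] at this

lemma h2inv_spec {u : ℝ} (hu : u ∈ Set.Icc (0:ℝ) 1) :
    h2inv u ∈ Set.Icc (0:ℝ) (1/2) ∧ h2 (h2inv u) = u := by
  have himg : u ∈ h2 '' Set.Icc 0 (1/2) := h2_image ▸ hu
  obtain ⟨r, hr, hru⟩ := himg
  have hset : {x : ℝ | 0 ≤ x ∧ x ≤ 1 / 2 ∧ h2 x = u} = {r} := by
    apply Set.eq_singleton_iff_unique_mem.2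
    refine ⟨⟨hr.1, hr.2, hru⟩, ?_⟩
    rintro x ⟨hx0, hx2, hxu⟩
    exact h2_strictMonoOn.injOn ⟨hx0, hx2⟩ ⟨hr.1, hr.2⟩ (hxu.trans hru.symm)
  have : h2inv u = r := by
    rw [h2inv, if_neg (not_lt.2 hu.1), hset, csInf_singleton]
  rw [this]; exact ⟨⟨hr.1, hr.2⟩, hru⟩

lemma h2inv_mem {u : ℝ} (hu : u ∈ Set.Icc (0:ℝ) 1) : h2inv u ∈ Set.Icc (0:ℝ) (1/2) :=
  (h2inv_spec hu).1

lemma h2_h2inv {u : ℝ} (hu : u ∈ Set.Icc (0:ℝ) 1) : h2 (h2inv u) = u :=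
  (h2inv_spec hu).2

lemma h2inv_h2 {r : ℝ} (hr : r ∈ Set.Icc (0:ℝ) (1/2)) : h2inv (h2 r) = r := by
  have hu : h2 r ∈ Set.Icc (0:ℝ) 1 :=
    ⟨h2_nonneg hr.1 (hr.2.trans (by norm_num)), h2_le_one r⟩
  exact h2_strictMonoOn.injOn (h2inv_mem hu) hr (h2_h2inv hu)

lemma h2inv_monotoneOn : MonotoneOn h2inv (Set.Icc (0:ℝ) 1) := by
  intro a ha b hb hab
  by_contra hlt
  push_neg at hlt
  have := h2_strictMonoOn (h2inv_mem hb) (h2inv_mem ha) hlt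
  rw [h2_h2inv ha, h2_h2inv hb] at this
  exact absurd hab (not_le.2 this)

/- pointwise identity : h2 (bconv δ u) = h2 (bconv δ (h2inv (h2 u))) for u ∈ [0,1] -/
lemma bconv_one_sub (a b : ℝ) : bconv a (1 - b) = 1 - bconv a b := by
  unfold bconv; ring

lemma h2_bconv_h2inv {a u : ℝ} (hu : u ∈ Set.Icc (0:ℝ) 1) :
    h2 (bconv a (h2inv (h2 u))) = h2 (bconv a u) := by
  rcases le_or_gt u (1/2) with h | h
  · rw [h2inv_h2 ⟨hu.1, h⟩]
  · have h1u : 1 - u ∈ Set.Icc (0:ℝ) (1/2) := ⟨by linarith [hu.2], by linarith⟩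
    rw [← h2_one_sub u, h2inv_h2 h1u, bconv_one_sub, h2_one_sub]


/- ### Section C : continuity of h2inv, and convexity of φ -/

lemma h2inv_eq_orderIso :
    ∀ u : Set.Icc (0:ℝ) 1,
      h2inv u = (((OrderIso.setCongr _ _ h2_image.symm).trans
        (h2_strictMonoOn.orderIso h2 _).symm) u : ℝ) := by
  intro u
  set e := h2_strictMonoOn.orderIso h2 (Set.Icc 0 (1/2))
  set r : Set.Icc (0:ℝ) (1/2) :=
    ((OrderIso.setCongr _ _ h2_image.symm).trans e.symm) u with hr
  have h1 : h2 (r : ℝ) = u := by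
    have key : ∀ x : Set.Icc (0:ℝ) (1/2), (e x : ℝ) = h2 (x : ℝ) := fun x => rfl
    have := e.apply_symm_apply ((OrderIso.setCongr _ _ h2_image.symm) u)
    have hval := congrArg Subtype.val this
    rw [key] at hval
    rw [hr]; simpa using hval
  have huIcc : (u : ℝ) ∈ Set.Icc (0:ℝ) 1 := u.2
  rw [← h1, h2inv_h2 r.2]

lemma h2inv_continuousOn : ContinuousOn h2inv (Set.Icc (0:ℝ) 1) := by
  rw [continuousOn_iff_continuous_restrict]
  have : Set.restrict (Set.Icc (0:ℝ) 1) h2inv = fun u =>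
      (((OrderIso.setCongr _ _ h2_image.symm).trans
        (h2_strictMonoOn.orderIso h2 _).symm) u : ℝ) := by
    funext u; exact h2inv_eq_orderIso u
  change Continuous (Set.restrict (Set.Icc (0:ℝ) 1) h2inv)
  rw [this]
  exact continuous_subtype_val.comp
    ((OrderIso.setCongr _ _ h2_image.symm).trans
      (h2_strictMonoOn.orderIso h2 _).symm).continuous

noncomputable def Lfun (x : ℝ) : ℝ := Real.log (1 - x) - Real.log x

lemma Lfun_pos {x : ℝ} (h0 : 0 < x) (hx : x < 1/2) : 0 < Lfun x :=
  sub_pos.2 (Real.log_lt_log h0 (by linarith))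

lemma Lfun_nonneg {x : ℝ} (h0 : 0 < x) (hx : x ≤ 1/2) : 0 ≤ Lfun x :=
  sub_nonneg.2 (Real.log_le_log h0 (by linarith))

lemma Lfun_half : Lfun (1/2) = 0 := by norm_num [Lfun]

lemma hasDerivAt_Lfun {x : ℝ} (h0 : x ≠ 0) (h1 : x ≠ 1) :
    HasDerivAt Lfun (-(1 - x)⁻¹ - x⁻¹) x := by
  have ha : HasDerivAt (fun y : ℝ => 1 - y) (-1) x := by
    simpa using (hasDerivAt_id x).const_sub 1
  have hlog1 : HasDerivAt (fun y : ℝ => Real.log (1 - y)) (-(1 - x)⁻¹) x := by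
    have := (Real.hasDerivAt_log (sub_ne_zero.2 (Ne.symm h1))).comp x ha
    exact this.congr_deriv (by ring)
  have hlog2 : HasDerivAt Real.log x⁻¹ x := Real.hasDerivAt_log h0
  exact hlog1.sub hlog2

lemma hasDerivAt_h2 {x : ℝ} (h0 : x ≠ 0) (h1 : x ≠ 1) :
    HasDerivAt h2 (Lfun x / Real.log 2) x := by
  have : HasDerivAt Real.binEntropy (Real.log (1-x) - Real.log x) x :=
    Real.hasDerivAt_binEntropy h0 h1
  have h := this.div_const (Real.log 2)
  have heq : h2 = fun p => Real.binEntropy p / Real.log 2 := funext h2_eq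
  rw [heq]
  exact h

lemma ContinuousOn_Lfun {s : Set ℝ} (hs : ∀ x ∈ s, 0 < x ∧ x < 1) : ContinuousOn Lfun s := by
  intro x hx
  exact ((Real.continuousAt_log (by linarith [(hs x hx).2] : (1:ℝ) - x ≠ 0)).comp
    ((continuous_const.sub continuous_id).continuousAt)).continuousWithinAt.sub
    ((Real.continuousAt_log (hs x hx).1.ne').continuousWithinAt)

/-- key log inequality : `log((1-t)/t) ≥ 2(1-2t)` on `(0, 1/2]`. -/
lemma Lfun_ge (t : ℝ) (ht : t ∈ Set.Ioc (0:ℝ) (1/2)) : 2 * (1 - 2*t) ≤ Lfun t := by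
  set F : ℝ → ℝ := fun x => Lfun x - 2 * (1 - 2*x) with hF
  have hanti : AntitoneOn F (Set.Ioc (0:ℝ) (1/2)) := by
    have hint : interior (Set.Ioc (0:ℝ) (1/2)) = Set.Ioo 0 (1/2) := interior_Ioc
    apply antitoneOn_of_deriv_nonpos (convex_Ioc 0 (1/2))
    · apply ContinuousOn.sub (ContinuousOn_Lfun ?_) (by fun_prop)
      rintro x ⟨hx1, hx2⟩; constructor <;> linarith
    · rw [hint]
      rintro x ⟨hx1, hx2⟩
      have hc : HasDerivAt (fun x : ℝ => 2 * (1 - 2*x)) (-4) x := by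
        have := (((hasDerivAt_id x).const_mul (2:ℝ)).const_sub (1:ℝ)).const_mul (2:ℝ)
        simpa using this.congr_deriv (by norm_num)
      exact ((hasDerivAt_Lfun hx1.ne' (by linarith)).sub hc).differentiableAt.differentiableWithinAt
    · rw [hint]
      rintro x ⟨hx1, hx2⟩
      have hc : HasDerivAt (fun x : ℝ => 2 * (1 - 2*x)) (-4) x := by
        have := (((hasDerivAt_id x).const_mul (2:ℝ)).const_sub (1:ℝ)).const_mul (2:ℝ)
        simpa using this.congr_deriv (by norm_num)
      have hd : HasDerivAt F (-(1 - x)⁻¹ - x⁻¹ - (-4)) x :=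
        (hasDerivAt_Lfun hx1.ne' (by linarith)).sub hc
      rw [hd.deriv]
      have hx3 : 0 < 1 - x := by linarith
      have h4 : 4 * (x * (1 - x)) ≤ 1 := by nlinarith [sq_nonneg (1 - 2*x)]
      have : (4:ℝ) ≤ (1-x)⁻¹ + x⁻¹ := by
        rw [inv_add_inv hx3.ne' hx1.ne']
        rw [le_div_iff₀ (by positivity)]
        nlinarith
      linarith
  have := hanti ht ⟨by norm_num, le_refl _⟩ ht.2
  have hF2 : F (1/2) = 0 := by
    have : Lfun (1/2) = 0 := Lfun_half
    simp only [hF]; rw [this]; ring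
  have : F (1/2) ≤ F t := this
  rw [hF2] at this
  simp only [hF] at this
  linarith

noncomputable def Kfun (t : ℝ) : ℝ := t * (1 - t) * Lfun t / (1 - 2*t)

lemma Kfun_monotoneOn : MonotoneOn Kfun (Set.Ioo (0:ℝ) (1/2)) := by
  have hint : interior (Set.Ioo (0:ℝ) (1/2)) = Set.Ioo 0 (1/2) := isOpen_Ioo.interior_eq
  have hG : ∀ x ∈ Set.Ioo (0:ℝ) (1/2),
      HasDerivAt (fun t => t * (1 - t) * Lfun t) ((1 - 2*x) * Lfun x - 1) x := by
    rintro x ⟨hx1, hx2⟩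
    have h1 : HasDerivAt (fun t : ℝ => t * (1 - t)) (1 - 2*x) x := by
      have := (hasDerivAt_id x).mul ((hasDerivAt_id x).const_sub 1)
      exact this.congr_deriv (by simp [id]; ring)
    have := h1.mul (hasDerivAt_Lfun hx1.ne' (by linarith))
    apply this.congr_deriv
    have hx3 : (0:ℝ) < 1 - x := by linarith
    field_simp
    ring
  have hK : ∀ x ∈ Set.Ioo (0:ℝ) (1/2), HasDerivAt Kfun
      ((((1 - 2*x) * Lfun x - 1) * (1 - 2*x) - (x * (1 - x) * Lfun x) * (-2)) / (1 - 2*x)^2) x := by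
    rintro x ⟨hx1, hx2⟩
    have h2x : (1:ℝ) - 2*x ≠ 0 := by intro h; rw [sub_eq_zero] at h; linarith
    have hden : HasDerivAt (fun t : ℝ => 1 - 2*t) (-2) x := by
      have := ((hasDerivAt_id x).const_mul (2:ℝ)).const_sub (1:ℝ)
      exact this.congr_deriv (by norm_num)
    exact (hG x ⟨hx1, hx2⟩).div hden h2x
  apply monotoneOn_of_deriv_nonneg (convex_Ioo 0 (1/2))
  · intro x hx
    exact ((hK x hx).continuousAt).continuousWithinAt
  · rw [hint]; intro x hx; exact (hK x hx).differentiableAt.differentiableWithinAt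
  · rw [hint]
    intro x hx
    rw [(hK x hx).deriv]
    obtain ⟨hx1, hx2⟩ := hx
    have h2x : (0:ℝ) < 1 - 2*x := by linarith
    apply div_nonneg _ (by positivity)
    have hL : 2 * (1 - 2*x) ≤ Lfun x := Lfun_ge x ⟨hx1, hx2.le⟩
    have hnum : ((1 - 2*x) * Lfun x - 1) * (1 - 2*x) - (x * (1 - x) * Lfun x) * (-2)
        = Lfun x * (1 - 2*x + 2*x^2) - (1 - 2*x) := by ring
    rw [hnum]
    have hpos : (0:ℝ) < 1 - 2*x + 2*x^2 := by nlinarith [sq_nonneg x]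
    nlinarith [sq_nonneg (1 - 2*x)]

lemma key_ineq {δ r : ℝ} (hδ : δ ∈ Set.Icc (0:ℝ) (1/2)) (hr : r ∈ Set.Ioo (0:ℝ) (1/2)) :
    (1 - 2*δ) * (r * (1 - r) * Lfun r) ≤
      (δ + (1 - 2*δ)*r) * (1 - (δ + (1 - 2*δ)*r)) * Lfun (δ + (1 - 2*δ)*r) := by
  obtain ⟨hδ0, hδ2⟩ := hδ
  obtain ⟨hr0, hr2⟩ := hr
  set s := δ + (1 - 2*δ)*r with hs
  have hrs : r ≤ s := by nlinarith
  have hs2 : s ≤ 1/2 := by nlinarith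
  have hs0 : 0 < s := lt_of_lt_of_le hr0 hrs
  have h1m2s : 1 - 2*s = (1 - 2*δ) * (1 - 2*r) := by rw [hs]; ring
  rcases eq_or_lt_of_le hs2 with heq | hlt
  · have hL : Lfun s = 0 := by rw [heq]; exact Lfun_half
    have hc : 1 - 2*δ = 0 := by
      have : (1 - 2*δ) * (1 - 2*r) = 0 := by rw [← h1m2s, heq]; ring
      rcases mul_eq_zero.1 this with h | h
      · exact h
      · exfalso; rw [sub_eq_zero] at h; linarith
    rw [hL, hc]
    simp
  · have hKmono := Kfun_monotoneOn ⟨hr0, hr2⟩ ⟨hs0, hlt⟩ hrs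
    have h2r : (0:ℝ) < 1 - 2*r := by linarith
    have h2s : (0:ℝ) < 1 - 2*s := by linarith
    unfold Kfun at hKmono
    rw [div_le_div_iff₀ h2r h2s] at hKmono
    have hc : 1 - 2*δ = (1 - 2*s)/(1 - 2*r) := by
      rw [h1m2s]; field_simp
    rw [hc]
    rw [div_mul_eq_mul_div, div_le_iff₀ h2r]
    calc (1 - 2*s) * (r * (1-r) * Lfun r) = r * (1-r) * Lfun r * (1 - 2*s) := by ring
    _ ≤ s * (1 - s) * Lfun s * (1 - 2*r) := hKmono
    _ = s * (1 - s) * Lfun s * (1 - 2*r) := rfl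

noncomputable def psiF (δ r : ℝ) : ℝ := (1 - 2*δ) * Lfun (δ + (1 - 2*δ)*r) / Lfun r

lemma s_mem {δ r : ℝ} (hδ : δ ∈ Set.Icc (0:ℝ) (1/2)) (hr : r ∈ Set.Ioo (0:ℝ) (1/2)) :
    0 < δ + (1 - 2*δ)*r ∧ δ + (1 - 2*δ)*r ≤ 1/2 := by
  obtain ⟨hδ0, hδ2⟩ := hδ; obtain ⟨hr0, hr2⟩ := hr
  constructor
  · nlinarith
  · nlinarith

lemma psiF_monotoneOn {δ : ℝ} (hδ : δ ∈ Set.Icc (0:ℝ) (1/2)) :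
    MonotoneOn (psiF δ) (Set.Ioo (0:ℝ) (1/2)) := by
  have hint : interior (Set.Ioo (0:ℝ) (1/2)) = Set.Ioo 0 (1/2) := isOpen_Ioo.interior_eq
  have hd : ∀ r ∈ Set.Ioo (0:ℝ) (1/2), HasDerivAt (psiF δ)
      ((((1 - 2*δ) * ((-(1 - (δ + (1 - 2*δ)*r))⁻¹ - (δ + (1 - 2*δ)*r)⁻¹) * (1 - 2*δ))) * Lfun r
        - ((1 - 2*δ) * Lfun (δ + (1 - 2*δ)*r)) * (-(1 - r)⁻¹ - r⁻¹)) / (Lfun r)^2) r := by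
    rintro r hr
    obtain ⟨hs0, hs2⟩ := s_mem hδ hr
    obtain ⟨hr0, hr2⟩ := hr
    have hLr : Lfun r ≠ 0 := (Lfun_pos hr0 hr2).ne'
    have hsd : HasDerivAt (fun t : ℝ => δ + (1 - 2*δ)*t) (1 - 2*δ) r := by
      have := ((hasDerivAt_id r).const_mul (1 - 2*δ)).const_add δ
      exact this.congr_deriv (by simp)
    have houter : HasDerivAt Lfun (-(1 - (δ + (1 - 2*δ)*r))⁻¹ - (δ + (1 - 2*δ)*r)⁻¹)
        (δ + (1 - 2*δ)*r) := hasDerivAt_Lfun hs0.ne' (by linarith)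
    have hnum : HasDerivAt (fun t => (1 - 2*δ) * Lfun (δ + (1 - 2*δ)*t))
        ((1 - 2*δ) * ((-(1 - (δ + (1 - 2*δ)*r))⁻¹ - (δ + (1 - 2*δ)*r)⁻¹) * (1 - 2*δ))) r :=
      (houter.comp r hsd).const_mul _
    exact hnum.div (hasDerivAt_Lfun hr0.ne' (by linarith)) hLr
  apply monotoneOn_of_deriv_nonneg (convex_Ioo 0 (1/2))
  · intro r hr; exact ((hd r hr).continuousAt).continuousWithinAt
  · rw [hint]; intro r hr; exact (hd r hr).differentiableAt.differentiableWithinAt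
  · rw [hint]
    intro r hr
    rw [(hd r hr).deriv]
    obtain ⟨hs0, hs2⟩ := s_mem hδ hr
    obtain ⟨hr0, hr2⟩ := hr
    set s := δ + (1 - 2*δ)*r with hsdef
    have hs1 : s < 1 := by linarith
    have hr1 : (0:ℝ) < 1 - r := by linarith
    have hs1' : (0:ℝ) < 1 - s := by linarith
    have hc : (0:ℝ) ≤ 1 - 2*δ := by linarith [hδ.2]
    apply div_nonneg _ (by positivity)
    have hkey := key_ineq hδ ⟨hr0, hr2⟩
    rw [← hsdef] at hkey
    have hex : (1 - 2*δ) * ((-(1 - s)⁻¹ - s⁻¹) * (1 - 2*δ)) * Lfun r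
        - (1 - 2*δ) * Lfun s * (-(1 - r)⁻¹ - r⁻¹)
        = (1 - 2*δ) * ((s * (1 - s) * Lfun s - (1 - 2*δ) * (r * (1 - r) * Lfun r))
            / (r * (1 - r) * s * (1 - s))) := by
      field_simp
      ring
    rw [hex]
    apply mul_nonneg hc
    apply div_nonneg (by linarith) (by positivity)

noncomputable def phiF (δ u : ℝ) : ℝ := h2 (bconv δ (h2inv u))

lemma bconv_eq (a b : ℝ) : bconv a b = a + (1 - 2*a)*b := by unfold bconv; ring

lemma h2inv_mem_Ioo {u : ℝ} (hu : u ∈ Set.Ioo (0:ℝ) 1) :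
    h2inv u ∈ Set.Ioo (0:ℝ) (1/2) := by
  have huI : u ∈ Set.Icc (0:ℝ) 1 := ⟨hu.1.le, hu.2.le⟩
  obtain ⟨hmem, heq⟩ := h2inv_spec huI
  constructor
  · rcases eq_or_lt_of_le hmem.1 with h | h
    · exfalso; rw [← h, h2_zero] at heq; exact hu.1.ne heq
    · exact h
  · rcases eq_or_lt_of_le hmem.2 with h | h
    · exfalso; rw [h, h2_half] at heq; exact hu.2.ne heq.symm
    · exact h

lemma hasDerivAt_phiF {δ u : ℝ} (hδ : δ ∈ Set.Icc (0:ℝ) (1/2)) (hu : u ∈ Set.Ioo (0:ℝ) 1) :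
    HasDerivAt (phiF δ) (psiF δ (h2inv u)) u := by
  set r := h2inv u with hrdef
  obtain ⟨hr0, hr2⟩ := h2inv_mem_Ioo hu
  have hLr : 0 < Lfun r := Lfun_pos hr0 hr2
  have hlog2 := log2_pos
  -- derivative of h2inv
  have hcont : ContinuousAt h2inv u :=
    (h2inv_continuousOn.continuousAt (Icc_mem_nhds hu.1 hu.2))
  have hh2 : HasDerivAt h2 (Lfun r / Real.log 2) r := hasDerivAt_h2 hr0.ne' (by linarith)
  have hne : Lfun r / Real.log 2 ≠ 0 := by positivity
  have hinv : HasDerivAt h2inv (Lfun r / Real.log 2)⁻¹ u := by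
    apply HasDerivAt.of_local_left_inverse hcont hh2 hne
    filter_upwards [Ioo_mem_nhds hu.1 hu.2] with y hy
    exact h2_h2inv ⟨hy.1.le, hy.2.le⟩
  -- composition
  obtain ⟨hs0, hs2⟩ := s_mem hδ ⟨hr0, hr2⟩
  have hinner : HasDerivAt (fun v => δ + (1 - 2*δ) * h2inv v)
      ((1 - 2*δ) * (Lfun r / Real.log 2)⁻¹) u := (hinv.const_mul _).const_add δ
  have houter : HasDerivAt h2 (Lfun (δ + (1 - 2*δ)*r) / Real.log 2) (δ + (1 - 2*δ)*r) :=
    hasDerivAt_h2 hs0.ne' (by linarith)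
  have hcomp := houter.comp u hinner
  have hphi : phiF δ = fun v => h2 (δ + (1 - 2*δ) * h2inv v) := by
    funext v; rw [phiF, bconv_eq]
  rw [hphi]
  apply hcomp.congr_deriv
  rw [psiF]
  field_simp

lemma phiF_continuousOn (δ : ℝ) : ContinuousOn (phiF δ) (Set.Icc (0:ℝ) 1) := by
  apply h2_continuous.comp_continuousOn
  have : Continuous (fun x : ℝ => bconv δ x) := by
    unfold bconv; fun_prop
  exact this.comp_continuousOn h2inv_continuousOn

lemma phiF_convexOn {δ : ℝ} (hδ : δ ∈ Set.Icc (0:ℝ) (1/2)) :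
    ConvexOn ℝ (Set.Icc (0:ℝ) 1) (phiF δ) := by
  apply MonotoneOn.convexOn_of_deriv (convex_Icc 0 1) (phiF_continuousOn δ)
  · rw [interior_Icc]
    intro u hu
    exact (hasDerivAt_phiF hδ hu).differentiableAt.differentiableWithinAt
  · rw [interior_Icc]
    intro a ha b hb hab
    rw [(hasDerivAt_phiF hδ ha).deriv, (hasDerivAt_phiF hδ hb).deriv]
    have hra := h2inv_mem_Ioo ha
    have hrb := h2inv_mem_Ioo hb
    exact psiF_monotoneOn hδ hra hrb
      (h2inv_monotoneOn ⟨ha.1.le, ha.2.le⟩ ⟨hb.1.le, hb.2.le⟩ hab)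

/- ### Section D : entropy of finite distributions -/

noncomputable def ent {α : Type*} [Fintype α] (p : α → ℝ) : ℝ :=
  -∑ a : α, p a * Real.logb 2 (p a)

lemma ent_comp_equiv {α β : Type*} [Fintype α] [Fintype β] (e : α ≃ β) (p : β → ℝ) :
    ent (fun a => p (e a)) = ent p := by
  unfold ent
  rw [Equiv.sum_comp e (fun b => p b * Real.logb 2 (p b))]

lemma neg_mul_logb_div {a m : ℝ} (ha : 0 ≤ a) (hm : 0 < m) :
    -(a * Real.logb 2 (a/m)) = -(a * Real.logb 2 a) + a * Real.logb 2 m := by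
  rcases eq_or_lt_of_le ha with h | h
  · simp [← h]
  · rw [Real.logb_div h.ne' hm.ne']; ring

lemma bool_step {q0 q1 : ℝ} (h0 : 0 ≤ q0) (h1 : 0 ≤ q1) :
    (q0 + q1) * h2 (q1 / (q0 + q1)) =
      -(q0 * Real.logb 2 q0) - q1 * Real.logb 2 q1 + (q0 + q1) * Real.logb 2 (q0 + q1) := by
  rcases eq_or_lt_of_le (add_nonneg h0 h1) with hm | hm
  · have hq0 : q0 = 0 := by linarith
    have hq1 : q1 = 0 := by linarith
    simp [hq0, hq1]
  · have hq : (1 : ℝ) - q1 / (q0 + q1) = q0 / (q0 + q1) := by field_simp; ring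
    unfold h2
    rw [hq]
    have e1 := neg_mul_logb_div h1 hm
    have e0 := neg_mul_logb_div h0 hm
    have expand : (q0 + q1) * (-(q1 / (q0 + q1) * Real.logb 2 (q1 / (q0 + q1)))
        - q0 / (q0 + q1) * Real.logb 2 (q0 / (q0 + q1)))
        = -(q1 * Real.logb 2 (q1/(q0+q1))) + -(q0 * Real.logb 2 (q0/(q0+q1))) := by
      field_simp
      ring
    rw [expand, e1, e0]
    ring

/-- conditional entropy of the `Bool` coordinate given the second coordinate -/
noncomputable def condB {α : Type*} [Fintype α] (q : Bool × α → ℝ) : ℝ :=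
  ∑ a : α, (q (false, a) + q (true, a)) * h2 (q (true, a) / (q (false, a) + q (true, a)))

noncomputable def margB {α : Type*} [Fintype α] (q : Bool × α → ℝ) : α → ℝ :=
  fun a => q (false, a) + q (true, a)

lemma ent_bool_chain {α : Type*} [Fintype α] (q : Bool × α → ℝ) (hq : ∀ x, 0 ≤ q x) :
    ent q = ent (margB q) + condB q := by
  have key : ∀ a : α, -(q (false,a) * Real.logb 2 (q (false,a)))
        - q (true,a) * Real.logb 2 (q (true,a))
      = (q (false,a) + q (true,a)) * h2 (q (true,a) / (q (false,a) + q (true,a)))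
        - (q (false,a) + q (true,a)) * Real.logb 2 (q (false,a) + q (true,a)) := by
    intro a; rw [bool_step (hq _) (hq _)]; ring
  have hsum := Finset.sum_congr rfl (fun a (_ : a ∈ Finset.univ) => key a)
  rw [Finset.sum_sub_distrib, Finset.sum_sub_distrib] at hsum
  simp only [Finset.sum_neg_distrib] at hsum
  unfold ent condB margB
  rw [Fintype.sum_prod_type, Fintype.sum_bool]
  linarith

lemma condB_nonneg {α : Type*} [Fintype α] (q : Bool × α → ℝ) (hq : ∀ x, 0 ≤ q x) :
    0 ≤ condB q := by
  apply Finset.sum_nonneg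
  intro a _
  apply mul_nonneg (add_nonneg (hq _) (hq _))
  rcases eq_or_lt_of_le (add_nonneg (hq (false, a)) (hq (true, a))) with hm | hm
  · rw [← hm]; simp [h2_zero]
  · exact h2_nonneg (div_nonneg (hq _) hm.le) ((div_le_one hm).2 (by linarith [hq (false, a)]))

lemma condB_le {α : Type*} [Fintype α] (q : Bool × α → ℝ) (hq : ∀ x, 0 ≤ q x) :
    condB q ≤ ∑ a : α, margB q a := by
  apply Finset.sum_le_sum
  intro a _
  unfold margB
  calc (q (false, a) + q (true, a)) * h2 (q (true, a) / (q (false, a) + q (true, a)))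
      ≤ (q (false, a) + q (true, a)) * 1 :=
        mul_le_mul_of_nonneg_left (h2_le_one _) (add_nonneg (hq _) (hq _))
    _ = q (false, a) + q (true, a) := mul_one _

lemma jensen_h2 {ι : Type*} [Fintype ι] (lam s : ι → ℝ) (hlam : ∀ i, 0 ≤ lam i)
    (hs : ∀ i, s i ∈ Set.Icc (0:ℝ) 1) :
    ∑ i, lam i * h2 (s i) ≤ (∑ i, lam i) * h2 ((∑ i, lam i * s i) / (∑ i, lam i)) := by
  rcases eq_or_lt_of_le (Finset.sum_nonneg fun i (_ : i ∈ Finset.univ) => hlam i) with hM | hM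
  · have hz : ∀ i ∈ Finset.univ, lam i = 0 :=
      (Finset.sum_eq_zero_iff_of_nonneg (fun i _ => hlam i)).1 hM.symm
    rw [← hM]
    rw [Finset.sum_eq_zero (fun i hi => by rw [hz i hi]; ring)]
    simp
  · set M := ∑ i, lam i with hMdef
    have hle := h2_concaveOn.le_map_sum (t := Finset.univ) (w := fun i => lam i / M)
      (p := s) (fun i _ => div_nonneg (hlam i) hM.le)
      (by rw [← Finset.sum_div, ← hMdef, div_self hM.ne']) (fun i _ => hs i)
    simp only [smul_eq_mul] at hle
    have harg : ∑ i, (lam i / M) * s i = (∑ i, lam i * s i) / M := by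
      rw [Finset.sum_div]
      exact Finset.sum_congr rfl (fun i _ => by ring)
    rw [harg] at hle
    have := mul_le_mul_of_nonneg_left hle hM.le
    calc ∑ i, lam i * h2 (s i) = M * ∑ i, (lam i / M) * h2 (s i) := by
          rw [Finset.mul_sum]
          exact Finset.sum_congr rfl (fun i _ => by field_simp)
      _ ≤ M * h2 ((∑ i, lam i * s i) / M) := this

lemma jensen_phi {ι : Type*} [Fintype ι] {δ : ℝ} (hδ : δ ∈ Set.Icc (0:ℝ) (1/2))
    (w t : ι → ℝ) (hw : ∀ i, 0 ≤ w i) (hw1 : ∑ i, w i = 1)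
    (ht : ∀ i, t i ∈ Set.Icc (0:ℝ) 1) :
    phiF δ (∑ i, w i * t i) ≤ ∑ i, w i * phiF δ (t i) := by
  have := (phiF_convexOn hδ).map_sum_le (t := Finset.univ) (w := w) (p := t)
    (fun i _ => hw i) hw1 (fun i _ => ht i)
  simpa [smul_eq_mul] using this

/- ### Section E : the finite-distribution core theorem -/

def consEquiv (n : ℕ) : Bool × (Fin n → Bool) ≃ (Fin (n+1) → Bool) where
  toFun p := Fin.cons p.1 p.2
  invFun f := (f 0, fun i => f i.succ)
  left_inv := by rintro ⟨b, y⟩; simp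
  right_inv f := funext fun i => by
    refine Fin.cases ?_ ?_ i
    · simp
    · intro j; simp

def consEquiv2 (n : ℕ) (TW : Type*) :
    Bool × ((Fin n → Bool) × TW) ≃ ((Fin (n+1) → Bool) × TW) where
  toFun p := (Fin.cons p.1 p.2.1, p.2.2)
  invFun z := (z.1 0, (fun i => z.1 i.succ, z.2))
  left_inv := by rintro ⟨b, y, w⟩; simp
  right_inv := by
    rintro ⟨f, w⟩
    refine Prod.ext ?_ rfl
    exact funext fun i => Fin.cases (by simp) (fun j => by simp) i

noncomputable def betf (δ : ℝ) {m : ℕ} (g : Fin m → Bool) : ℝ :=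
  ∏ k, (if g k then δ else 1 - δ)

lemma betf_nonneg {δ : ℝ} (hδ : δ ∈ Set.Icc (0:ℝ) (1/2)) {m : ℕ} (g : Fin m → Bool) :
    0 ≤ betf δ g := by
  apply Finset.prod_nonneg
  intro k _
  by_cases h : g k <;> simp [h] <;> [exact hδ.1; linarith [hδ.2]]

lemma betf_cons (δ : ℝ) {n : ℕ} (b : Bool) (y : Fin n → Bool) :
    betf δ (Fin.cons b y) = (if b then δ else 1 - δ) * betf δ y := by
  unfold betf
  have h : (fun k : Fin (n+1) => if (Fin.cons b y : Fin (n+1) → Bool) k then δ else 1 - δ)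
      = Fin.cons (if b then δ else 1-δ) (fun j => if y j then δ else 1 - δ) := by
    funext k
    refine Fin.cases ?_ ?_ k
    · simp
    · intro j; simp
  calc ∏ k, (if (Fin.cons b y : Fin (n+1) → Bool) k then δ else 1 - δ)
      = ∏ k, (Fin.cons (if b then δ else 1-δ) (fun j => if y j then δ else 1 - δ) : Fin (n+1) → ℝ) k := by rw [h]
    _ = (if b then δ else 1-δ) * ∏ j, (if y j then δ else 1 - δ) := Fin.prod_cons _ _

lemma betf_sum (δ : ℝ) (m : ℕ) : ∑ g : Fin m → Bool, betf δ g = 1 := by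
  induction m with
  | zero =>
    rw [Fintype.sum_unique]
    unfold betf
    simp
  | succ n ih =>
    rw [← Equiv.sum_comp (consEquiv n) (fun g => betf δ g), Fintype.sum_prod_type,
      Fintype.sum_bool]
    have h1 : ∀ b : Bool, ∑ y : Fin n → Bool, betf δ ((consEquiv n) (b, y))
        = (if b then δ else 1 - δ) * ∑ y : Fin n → Bool, betf δ y := by
      intro b
      rw [Finset.mul_sum]
      exact Finset.sum_congr rfl fun y _ => by
        show betf δ (Fin.cons b y) = _
        rw [betf_cons]
    rw [h1, h1, ih]
    norm_num

def xorPerm {m : ℕ} (y : Fin m → Bool) : (Fin m → Bool) ≃ (Fin m → Bool) :=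
  Function.Involutive.toPerm (fun x => fun k => y k ^^ x k)
    (fun x => funext fun k => by simp [Bool.xor_assoc])

lemma betf_xor_sum (δ : ℝ) {m : ℕ} (y : Fin m → Bool) :
    ∑ x : Fin m → Bool, betf δ (fun k => y k ^^ x k) = 1 := by
  rw [← betf_sum δ m, ← Equiv.sum_comp (xorPerm y) (fun g => betf δ g)]
  rfl

noncomputable def xdist (δ : ℝ) {m : ℕ} {TW : Type*} [Fintype TW]
    (r : (Fin m → Bool) × TW → ℝ) : (Fin m → Bool) × TW → ℝ :=
  fun z => ∑ y : Fin m → Bool, betf δ (fun k => y k ^^ z.1 k) * r (y, z.2)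

noncomputable def margW {m : ℕ} {TW : Type*} [Fintype TW]
    (r : (Fin m → Bool) × TW → ℝ) : TW → ℝ :=
  fun w => ∑ y, r (y, w)

lemma xor_cons {n : ℕ} (b c : Bool) (y x : Fin n → Bool) :
    (fun k => (Fin.cons c y : Fin (n+1) → Bool) k ^^ (Fin.cons b x : Fin (n+1) → Bool) k)
      = Fin.cons (c ^^ b) (fun j => y j ^^ x j) :=
  funext fun k => Fin.cases (by simp) (fun j => by simp) k

lemma xdist_cons {δ : ℝ} {n : ℕ} {TW : Type*} [Fintype TW]
    (r : (Fin (n+1) → Bool) × TW → ℝ) (b : Bool) (x : Fin n → Bool) (w : TW) :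
    xdist δ r (Fin.cons b x, w)
      = ∑ y' : Fin n → Bool, ∑ c : Bool,
          (if (c ^^ b) then δ else 1 - δ) * betf δ (fun j => y' j ^^ x j)
            * r (Fin.cons c y', w) := by
  unfold xdist
  rw [← Equiv.sum_comp (consEquiv n)
    (fun y => betf δ (fun k => y k ^^ (Fin.cons b x : Fin (n+1) → Bool) k) * r (y, w)),
    Fintype.sum_prod_type]
  rw [Finset.sum_comm]
  apply Finset.sum_congr rfl
  intro y' _
  apply Finset.sum_congr rfl
  intro c _
  show (betf δ fun k => (Fin.cons c y' : Fin (n+1) → Bool) k ^^ (Fin.cons b x : Fin (n+1) → Bool) k)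
      * r (Fin.cons c y', w) = _
  rw [show (fun k => (Fin.cons c y' : Fin (n+1) → Bool) k ^^ (Fin.cons b x : Fin (n+1) → Bool) k)
      = Fin.cons (c ^^ b) (fun j => y' j ^^ x j) from xor_cons b c y' x, betf_cons]

def unitEquiv (TW : Type*) : TW ≃ (Fin 0 → Bool) × TW :=
  ⟨fun w => (default, w), fun z => z.2, fun w => rfl,
    fun z => Prod.ext (Subsingleton.elim _ _) rfl⟩

lemma sum_bool_prod {α : Type*} [Fintype α] (f : Bool × α → ℝ) :
    ∑ p, f p = ∑ a, (f (false, a) + f (true, a)) := by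
  rw [Fintype.sum_prod_type, Fintype.sum_bool, ← Finset.sum_add_distrib]
  exact Finset.sum_congr rfl fun a _ => add_comm _ _

theorem core {TW : Type*} [Fintype TW] {δ : ℝ} (hδ : δ ∈ Set.Icc (0:ℝ) (1/2)) :
    ∀ (m : ℕ) (r : (Fin m → Bool) × TW → ℝ), (∀ z, 0 ≤ r z) → (∑ z, r z = 1) →
      (0 ≤ ent r - ent (margW r) ∧ ent r - ent (margW r) ≤ m) ∧
      (m : ℝ) * phiF δ ((ent r - ent (margW r)) / m) ≤ ent (xdist δ r) - ent (margW r) := by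
  intro m
  induction m with
  | zero =>
    intro r hr hr1
    have h1 : ∀ g : Fin 0 → Bool, betf δ g = 1 := by
      intro g; unfold betf; exact Finset.prod_of_isEmpty _
    have hmargW : ent (margW r) = ent r := by
      have heq : margW r = fun w => r (unitEquiv TW w) := by
        funext w
        show ∑ y : Fin 0 → Bool, r (y, w) = r (default, w)
        rw [Finset.univ_unique, Finset.sum_singleton]
        exact congrArg r (Prod.ext (Subsingleton.elim _ _) rfl)
      rw [heq, ent_comp_equiv (unitEquiv TW) r]
    have hxdist : xdist δ r = r := by
      funext z
      obtain ⟨x, w⟩ := z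
      show ∑ y : Fin 0 → Bool, betf δ (fun k => y k ^^ x k) * r (y, w) = r (x, w)
      rw [Finset.univ_unique, Finset.sum_singleton, h1, one_mul]
      exact congrArg r (Prod.ext (Subsingleton.elim _ _) rfl)
    rw [hmargW, hxdist]
    norm_num
  | succ n ih =>
    intro r hr hr1
    set E := consEquiv2 n TW with hE
    set qY : Bool × ((Fin n → Bool) × TW) → ℝ := fun p => r (E p) with hqY
    set qX : Bool × ((Fin n → Bool) × TW) → ℝ := fun p => xdist δ r (E p) with hqX
    have hqYnn : ∀ p, 0 ≤ qY p := fun p => hr _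
    have hqXnn : ∀ p, 0 ≤ qX p := by
      intro p
      apply Finset.sum_nonneg
      intro y _
      exact mul_nonneg (betf_nonneg hδ _) (hr _)
    set r' : (Fin n → Bool) × TW → ℝ := margB qY with hr'
    have hr'nn : ∀ z, 0 ≤ r' z := fun z => add_nonneg (hqYnn _) (hqYnn _)
    have hr'1 : ∑ z, r' z = 1 := by
      rw [hr']
      unfold margB
      rw [← sum_bool_prod qY, hqY, Equiv.sum_comp E r, hr1]
    -- entropies via the equivalence
    have hentY : ent qY = ent r := ent_comp_equiv E r
    have hentX : ent qX = ent (xdist δ r) := ent_comp_equiv E (xdist δ r)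
    -- W-marginals agree
    have hmargW' : margW r' = margW r := by
      funext w
      show ∑ y' : Fin n → Bool, (r (E (false, y', w)) + r (E (true, y', w))) = _
      rw [margW, ← Equiv.sum_comp (consEquiv n) (fun y => r (y, w)), Fintype.sum_prod_type,
        Fintype.sum_bool, ← Finset.sum_add_distrib]
      exact Finset.sum_congr rfl fun y' _ => add_comm _ _
    -- the Bool-marginal of qX is xdist δ r'
    have hmargBX : margB qX = xdist δ r' := by
      funext z
      obtain ⟨x, w⟩ := z
      show xdist δ r (Fin.cons false x, w) + xdist δ r (Fin.cons true x, w) = _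
      rw [xdist_cons, xdist_cons, ← Finset.sum_add_distrib]
      show _ = ∑ y' : Fin n → Bool, betf δ (fun k => y' k ^^ x k) * r' (y', w)
      apply Finset.sum_congr rfl
      intro y' _
      rw [Fintype.sum_bool, Fintype.sum_bool]
      show (if (true ^^ false) = true then δ else 1-δ) * betf δ _ * r (Fin.cons true y', w)
          + (if (false ^^ false) = true then δ else 1-δ) * betf δ _ * r (Fin.cons false y', w)
          + ((if (true ^^ true) = true then δ else 1-δ) * betf δ _ * r (Fin.cons true y', w)
          + (if (false ^^ true) = true then δ else 1-δ) * betf δ _ * r (Fin.cons false y', w))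
          = betf δ (fun k => y' k ^^ x k) * (qY (false, y', w) + qY (true, y', w))
      have e1 : qY (false, y', w) = r (Fin.cons false y', w) := rfl
      have e2 : qY (true, y', w) = r (Fin.cons true y', w) := rfl
      rw [e1, e2]
      simp only [Bool.xor_false, Bool.xor_true, Bool.not_true, Bool.not_false]
      norm_num
      ring
    -- the true-fiber of qX
    have hqXtrue : ∀ (x : Fin n → Bool) (w : TW), qX (true, x, w)
        = ∑ y' : Fin n → Bool, betf δ (fun k => y' k ^^ x k)
            * (δ * qY (false, y', w) + (1 - δ) * qY (true, y', w)) := by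
      intro x w
      show xdist δ r (Fin.cons true x, w) = _
      rw [xdist_cons]
      apply Finset.sum_congr rfl
      intro y' _
      rw [Fintype.sum_bool]
      have e1 : qY (false, y', w) = r (Fin.cons false y', w) := rfl
      have e2 : qY (true, y', w) = r (Fin.cons true y', w) := rfl
      rw [e1, e2]
      simp only [Bool.xor_true, Bool.not_true, Bool.not_false]
      norm_num
      ring
    -- chain rules
    have hchainY : ent r = ent r' + condB qY := by
      rw [← hentY, ent_bool_chain qY hqYnn, hr']
    have hchainX : ent (xdist δ r) = ent (xdist δ r') + condB qX := by
      rw [← hentX, ent_bool_chain qX hqXnn, hmargBX]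
    -- conditional-probability ratios
    set u : (Fin n → Bool) × TW → ℝ := fun a => qY (true, a) / r' a with hu
    have humem : ∀ a, u a ∈ Set.Icc (0:ℝ) 1 := by
      intro a
      have hra : r' a = qY (false, a) + qY (true, a) := rfl
      rcases eq_or_lt_of_le (hr'nn a) with h | h
      · have h0 : qY (true, a) = 0 := by
          have h1' := hqYnn (false, a)
          have h2' := hqYnn (true, a)
          have h3 : qY (false, a) + qY (true, a) = 0 := by rw [← hra]; exact h.symm
          linarith
        have : u a = 0 := by rw [hu]; simp only [h0, zero_div]
        rw [this]; norm_num
      · constructor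
        · exact div_nonneg (hqYnn _) h.le
        · rw [hu]
          apply (div_le_one h).2
          rw [hra]
          linarith [hqYnn (false, a)]
    have hbconv_mem : ∀ a, bconv δ (u a) ∈ Set.Icc (0:ℝ) 1 := by
      intro a
      obtain ⟨hu0, hu1⟩ := humem a
      rw [bconv_eq]
      constructor
      · nlinarith [hδ.1, hδ.2]
      · nlinarith [hδ.1, hδ.2]
    have hpoint : ∀ a, r' a * bconv δ (u a)
        = δ * qY (false, a) + (1 - δ) * qY (true, a) := by
      intro a
      have hra : r' a = qY (false, a) + qY (true, a) := rfl
      rcases eq_or_lt_of_le (hr'nn a) with h | h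
      · have h1' := hqYnn (false, a)
        have h2' := hqYnn (true, a)
        have h3 : qY (false, a) + qY (true, a) = 0 := by rw [← hra]; exact h.symm
        have hf : qY (false, a) = 0 := by linarith
        have ht : qY (true, a) = 0 := by linarith
        rw [← h, hf, ht]; ring
      · have hne : r' a ≠ 0 := h.ne'
        rw [hu, bconv_eq]
        field_simp
        rw [hra]
        ring
    -- single-letter Mrs. Gerber step : condB qX ≥ ∑ r' * h2 (bconv δ u)
    have hsingle : ∑ a, r' a * h2 (bconv δ (u a)) ≤ condB qX := by
      have hjen : ∀ (x : Fin n → Bool) (w : TW),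
          ∑ y' : Fin n → Bool,
              (betf δ (fun k => y' k ^^ x k) * r' (y', w)) * h2 (bconv δ (u (y', w)))
            ≤ margB qX (x, w) * h2 (qX (true, x, w) / margB qX (x, w)) := by
        intro x w
        have hlamnn : ∀ y' : Fin n → Bool, 0 ≤ betf δ (fun k => y' k ^^ x k) * r' (y', w) :=
          fun y' => mul_nonneg (betf_nonneg hδ _) (hr'nn _)
        have h1 : ∑ y' : Fin n → Bool, betf δ (fun k => y' k ^^ x k) * r' (y', w)
            = margB qX (x, w) := by
          rw [hmargBX]; rfl
        have h2s : ∑ y' : Fin n → Bool,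
            (betf δ (fun k => y' k ^^ x k) * r' (y', w)) * bconv δ (u (y', w))
            = qX (true, x, w) := by
          rw [hqXtrue x w]
          apply Finset.sum_congr rfl
          intro y' _
          rw [mul_assoc, hpoint (y', w)]
        have := jensen_h2 (fun y' => betf δ (fun k => y' k ^^ x k) * r' (y', w))
          (fun y' => bconv δ (u (y', w))) hlamnn (fun y' => hbconv_mem (y', w))
        rw [h1, h2s] at this
        exact this
      have hswap : ∑ a, r' a * h2 (bconv δ (u a))
          = ∑ x : Fin n → Bool, ∑ w : TW, ∑ y' : Fin n → Bool,
              (betf δ (fun k => y' k ^^ x k) * r' (y', w)) * h2 (bconv δ (u (y', w))) := by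
        have step1 : ∑ a, r' a * h2 (bconv δ (u a))
            = ∑ y' : Fin n → Bool, ∑ w : TW,
                (∑ x : Fin n → Bool, betf δ (fun k => y' k ^^ x k))
                  * (r' (y', w) * h2 (bconv δ (u (y', w)))) := by
          rw [Fintype.sum_prod_type]
          apply Finset.sum_congr rfl
          intro y' _
          apply Finset.sum_congr rfl
          intro w _
          rw [betf_xor_sum, one_mul]
        rw [step1]
        have step2 : ∀ y' : Fin n → Bool, ∀ w : TW,
            (∑ x : Fin n → Bool, betf δ (fun k => y' k ^^ x k))
              * (r' (y', w) * h2 (bconv δ (u (y', w))))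
            = ∑ x : Fin n → Bool,
                (betf δ (fun k => y' k ^^ x k) * r' (y', w)) * h2 (bconv δ (u (y', w))) := by
          intro y' w
          rw [Finset.sum_mul]
          apply Finset.sum_congr rfl
          intro x _
          ring
        calc ∑ y' : Fin n → Bool, ∑ w : TW,
                (∑ x : Fin n → Bool, betf δ (fun k => y' k ^^ x k))
                  * (r' (y', w) * h2 (bconv δ (u (y', w))))
            = ∑ y' : Fin n → Bool, ∑ w : TW, ∑ x : Fin n → Bool,
                (betf δ (fun k => y' k ^^ x k) * r' (y', w)) * h2 (bconv δ (u (y', w))) := by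
              apply Finset.sum_congr rfl
              intro y' _
              apply Finset.sum_congr rfl
              intro w _
              exact step2 y' w
          _ = ∑ y' : Fin n → Bool, ∑ x : Fin n → Bool, ∑ w : TW,
                (betf δ (fun k => y' k ^^ x k) * r' (y', w)) * h2 (bconv δ (u (y', w))) := by
              apply Finset.sum_congr rfl
              intro y' _
              exact Finset.sum_comm
          _ = ∑ x : Fin n → Bool, ∑ y' : Fin n → Bool, ∑ w : TW,
                (betf δ (fun k => y' k ^^ x k) * r' (y', w)) * h2 (bconv δ (u (y', w))) :=
              Finset.sum_comm
          _ = ∑ x : Fin n → Bool, ∑ w : TW, ∑ y' : Fin n → Bool,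
                (betf δ (fun k => y' k ^^ x k) * r' (y', w)) * h2 (bconv δ (u (y', w))) := by
              apply Finset.sum_congr rfl
              intro x _
              exact Finset.sum_comm
      rw [hswap]
      unfold condB
      rw [Fintype.sum_prod_type]
      apply Finset.sum_le_sum
      intro x _
      apply Finset.sum_le_sum
      intro w _
      exact hjen x w
    -- Jensen for phi on the Y side
    have hcondY : condB qY = ∑ a, r' a * h2 (u a) := rfl
    have hb0 : 0 ≤ condB qY := condB_nonneg qY hqYnn
    have hb1 : condB qY ≤ 1 := by
      have := condB_le qY hqYnn
      rw [show ∑ a, margB qY a = 1 from hr'1] at this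
      exact this
    have hjphi : phiF δ (condB qY) ≤ ∑ a, r' a * phiF δ (h2 (u a)) := by
      rw [hcondY]
      exact jensen_phi hδ r' (fun a => h2 (u a)) hr'nn hr'1
        (fun a => ⟨h2_nonneg (humem a).1 (humem a).2, h2_le_one _⟩)
    have hphib : phiF δ (condB qY) ≤ condB qX := by
      calc phiF δ (condB qY) ≤ ∑ a, r' a * phiF δ (h2 (u a)) := hjphi
        _ = ∑ a, r' a * h2 (bconv δ (u a)) := by
            apply Finset.sum_congr rfl
            intro a _
            rw [phiF, h2_bconv_h2inv (humem a)]
        _ ≤ condB qX := hsingle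
    -- induction hypothesis
    obtain ⟨⟨hD'0, hD'n⟩, hIH⟩ := ih r' hr'nn hr'1
    set D' := ent r' - ent (margW r') with hD'
    set b := condB qY with hbdef
    -- choose the averaged argument
    set aa : ℝ := D' / n with haa
    have hna : (n:ℝ) * aa = D' := by
      rcases Nat.eq_zero_or_pos n with hn | hn
      · subst hn
        have : D' = 0 := le_antisymm (by exact_mod_cast hD'n) hD'0
        rw [haa, this]
        try simp
      · have : (n:ℝ) ≠ 0 := Nat.cast_ne_zero.2 hn.ne'
        rw [haa, mul_div_cancel₀ _ this]
    have haamem : aa ∈ Set.Icc (0:ℝ) 1 := by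
      rcases Nat.eq_zero_or_pos n with hn | hn
      · subst hn
        have : D' = 0 := le_antisymm (by exact_mod_cast hD'n) hD'0
        rw [haa, this]
        try norm_num
      · have hpos : (0:ℝ) < n := Nat.cast_pos.2 hn
        constructor
        · exact div_nonneg hD'0 hpos.le
        · rw [haa, div_le_one hpos]; exact hD'n
    -- combine via convexity
    have hcomb : ((n:ℝ)+1) * phiF δ (((n:ℝ)*aa + b)/((n:ℝ)+1))
        ≤ (n:ℝ) * phiF δ aa + phiF δ b := by
      have hn1 : (0:ℝ) < (n:ℝ) + 1 := by positivity
      have hθ0 : (0:ℝ) ≤ (n:ℝ)/((n:ℝ)+1) := by positivity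
      have hθ1 : (0:ℝ) ≤ 1/((n:ℝ)+1) := by positivity
      have hθ : (n:ℝ)/((n:ℝ)+1) + 1/((n:ℝ)+1) = 1 := by field_simp
      have hcv := (phiF_convexOn hδ).2 haamem ⟨hb0, hb1⟩ hθ0 hθ1 hθ
      simp only [smul_eq_mul] at hcv
      have harg : (n:ℝ)/((n:ℝ)+1) * aa + 1/((n:ℝ)+1) * b = ((n:ℝ)*aa + b)/((n:ℝ)+1) := by
        field_simp
        try ring
      rw [harg] at hcv
      have := mul_le_mul_of_nonneg_left hcv hn1.le
      calc ((n:ℝ)+1) * phiF δ (((n:ℝ)*aa + b)/((n:ℝ)+1))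
          ≤ ((n:ℝ)+1) * ((n:ℝ)/((n:ℝ)+1) * phiF δ aa + 1/((n:ℝ)+1) * phiF δ b) := this
        _ = (n:ℝ) * phiF δ aa + phiF δ b := by field_simp; try ring
    -- final assembly
    have hentW : ent (margW r) = ent (margW r') := by rw [hmargW']
    have hDsum : ent r - ent (margW r) = (n:ℝ)*aa + b := by
      rw [hchainY, hentW, hna, hD', hbdef]
      ring
    have hXsum : ent (xdist δ r) - ent (margW r)
        = (ent (xdist δ r') - ent (margW r')) + condB qX := by
      rw [hchainX, hentW]
      ring
    constructor
    · constructor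
      · rw [hDsum, hna]
        linarith
      · rw [hDsum, hna]
        push_cast
        linarith
    · rw [hDsum, hXsum]
      push_cast
      calc ((n:ℝ)+1) * phiF δ (((n:ℝ)*aa + b)/((n:ℝ)+1))
          ≤ (n:ℝ) * phiF δ aa + phiF δ b := hcomb
        _ ≤ (ent (xdist δ r') - ent (margW r')) + condB qX := by
            linarith [hIH, hphib]

/- ### Section F : bridge from measures to finite distributions -/

lemma toReal_measure_iUnion {Ω : Type*} [MeasurableSpace Ω] (μ : Measure Ω)
    [IsProbabilityMeasure μ] {ι S : Type*} [Fintype ι] [MeasurableSpace S]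
    [MeasurableSingletonClass S]
    (A : Ω → S) (hA : Measurable A) (g : ι → S) (hg : Function.Injective g) (T : Set Ω)
    (hT : T = ⋃ i, A ⁻¹' {g i}) :
    (μ T).toReal = ∑ i, (μ (A ⁻¹' {g i})).toReal := by
  have hdisj : Pairwise (Function.onFun Disjoint (fun i => A ⁻¹' {g i})) := by
    intro i j hij
    apply Set.disjoint_left.2
    intro ω hi hj
    exact hij (hg (by
      have h1 : A ω = g i := hi
      have h2 : A ω = g j := hj
      rw [← h1, h2]))
  have hmeas : ∀ i, MeasurableSet (A ⁻¹' {g i}) := fun i => hA (measurableSet_singleton _)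
  rw [hT, measure_iUnion hdisj hmeas, tsum_fintype]
  exact ENNReal.toReal_sum (fun i _ => measure_ne_top μ _)

/-- `m`-letter superadditivity of Witsenhausen's conditional entropy bound for
the binary symmetric channel: if `N = (N1, …, Nm)` has i.i.d. `Ber(δ)`
components and is independent of `(Y, W)`, and `Xk = Yk ⊕ Nk`, then
`H(X1,…,Xm | W) ≥ m · h2(δ ⋆ h2⁻¹(H(Y1,…,Ym | W) / m))`. -/
theorem stmt17 {Ω TW : Type*} [MeasurableSpace Ω] [Fintype TW]
    [MeasurableSpace TW] [MeasurableSingletonClass TW]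
    (μ : Measure Ω) [IsProbabilityMeasure μ]
    (δ : ℝ) (hδ : δ ∈ Set.Icc (0 : ℝ) (1 / 2))
    (m : ℕ) (hm : 0 < m)
    (Y N : Ω → (Fin m → Bool)) (W : Ω → TW)
    (hY : Measurable Y) (hN : Measurable N) (hW : Measurable W)
    -- the components of `N` are i.i.d. `Ber(δ)`:
    (hNdist : ∀ g : Fin m → Bool,
      (μ (N ⁻¹' {g})).toReal = ∏ k : Fin m, (if g k then δ else 1 - δ))
    -- `N` is independent of the pair `(Y, W)`:
    (hindep : ∀ (g y : Fin m → Bool) (w : TW),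
      (μ (N ⁻¹' {g} ∩ (fun ω => (Y ω, W ω)) ⁻¹' {(y, w)})).toReal
        = (μ (N ⁻¹' {g})).toReal * (μ ((fun ω => (Y ω, W ω)) ⁻¹' {(y, w)})).toReal) :
    (m : ℝ) * h2 (bconv δ (h2inv (condH2 μ Y W / m)))
      ≤ condH2 μ (fun ω k => Y ω k ^^ N ω k) W := by
  classical
  set YW : Ω → (Fin m → Bool) × TW := fun ω => (Y ω, W ω) with hYW
  have hYWm : Measurable YW := hY.prodMk hW
  set r : (Fin m → Bool) × TW → ℝ := fun z => (μ (YW ⁻¹' {z})).toReal with hrdef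
  have hB1 : ∀ z, 0 ≤ r z := fun z => ENNReal.toReal_nonneg
  have hB2 : ∑ z, r z = 1 := by
    have := toReal_measure_iUnion μ YW hYWm (id : (Fin m → Bool) × TW → _)
      (fun a b h => h) Set.univ (by
        ext ω
        simp)
    rw [measure_univ] at this
    simpa using this.symm
  -- W marginal
  have hB4 : ∀ w : TW, (μ (W ⁻¹' {w})).toReal = ∑ y : Fin m → Bool, r (y, w) := by
    intro w
    exact toReal_measure_iUnion μ YW hYWm (g := fun y : Fin m → Bool => (y, w))
      (fun a b h => by injection h) (W ⁻¹' {w}) (by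
        ext ω
        simp [hYW])
  -- X distribution
  set X : Ω → (Fin m → Bool) := fun ω k => Y ω k ^^ N ω k with hX
  set A : Ω → (Fin m → Bool) × ((Fin m → Bool) × TW) := fun ω => (N ω, (Y ω, W ω)) with hA
  have hAm : Measurable A := hN.prodMk (hY.prodMk hW)
  have hB5 : ∀ (x : Fin m → Bool) (w : TW),
      (μ ((fun ω => (X ω, W ω)) ⁻¹' {(x, w)})).toReal
        = ∑ y : Fin m → Bool, betf δ (fun k => y k ^^ x k) * r (y, w) := by
    intro x w
    have hstep := toReal_measure_iUnion μ A hAm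
      (g := fun y : Fin m → Bool => ((fun k => y k ^^ x k), (y, w)))
      (fun a b h => by
        have := (Prod.ext_iff.1 h).2
        exact (Prod.ext_iff.1 this).1)
      ((fun ω => (X ω, W ω)) ⁻¹' {(x, w)}) ?_
    · rw [hstep]
      apply Finset.sum_congr rfl
      intro y _
      have : A ⁻¹' {((fun k => y k ^^ x k), (y, w))}
          = N ⁻¹' {fun k => y k ^^ x k} ∩ YW ⁻¹' {(y, w)} := by
        ext ω
        simp only [hA, Set.mem_preimage, Set.mem_singleton_iff, Set.mem_inter_iff, hYW,
          Prod.ext_iff]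
        try tauto
      rw [this, hindep, hNdist]
      try rfl
    · ext ω
      constructor
      · intro hmem
        have hpair : (X ω, W ω) = (x, w) := hmem
        have hxx : X ω = x := congrArg Prod.fst hpair
        have hw : W ω = w := congrArg Prod.snd hpair
        refine Set.mem_iUnion.2 ⟨Y ω, ?_⟩
        have hNeq : N ω = fun k => Y ω k ^^ x k := by
          funext k
          have hk : (Y ω k ^^ N ω k) = x k := congrFun hxx k
          rw [← hk]
          cases Y ω k <;> cases N ω k <;> rfl
        show (N ω, (Y ω, W ω)) ∈ ({((fun k => Y ω k ^^ x k), (Y ω, w))} : Set _)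
        rw [Set.mem_singleton_iff, hNeq, hw]
      · intro hmem
        obtain ⟨y, hy⟩ := Set.mem_iUnion.1 hmem
        have htrip : (N ω, (Y ω, W ω)) = ((fun k => y k ^^ x k), (y, w)) := hy
        have hN' : N ω = fun k => y k ^^ x k := congrArg Prod.fst htrip
        have hy' : Y ω = y := congrArg (fun p => p.2.1) htrip
        have hw' : W ω = w := congrArg (fun p => p.2.2) htrip
        show (X ω, W ω) = (x, w)
        rw [hw']
        refine Prod.ext ?_ rfl
        funext k
        show (Y ω k ^^ N ω k) = x k
        rw [congrFun hN' k, hy']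
        cases y k <;> cases x k <;> rfl
  -- identify entropies
  have hentYW : H2 μ YW = ent r := rfl
  have hentW : H2 μ W = ent (margW r) := by
    have heq : (fun w => (μ (W ⁻¹' {w})).toReal) = margW r := funext fun w => hB4 w
    show ent (fun w => (μ (W ⁻¹' {w})).toReal) = ent (margW r)
    rw [heq]
  have hentXW : H2 μ (fun ω => (X ω, W ω)) = ent (xdist δ r) := by
    have heq : (fun z : (Fin m → Bool) × TW =>
        (μ ((fun ω => (X ω, W ω)) ⁻¹' {z})).toReal) = xdist δ r := by
      funext z
      obtain ⟨x, w⟩ := z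
      exact hB5 x w
    show ent (fun z : (Fin m → Bool) × TW =>
        (μ ((fun ω => (X ω, W ω)) ⁻¹' {z})).toReal) = ent (xdist δ r)
    rw [heq]
  have hcore := (core hδ m r hB1 hB2).2
  have hcondY : condH2 μ Y W = ent r - ent (margW r) := by
    unfold condH2
    rw [← hYW, hentYW, hentW]
  have hcondX : condH2 μ X W = ent (xdist δ r) - ent (margW r) := by
    unfold condH2
    rw [hentXW, hentW]
  rw [hcondX, hcondY]
  exact hcore
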